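/- Under Assumption 2.1, the step-size bound 0 < w ≤ min{1, 𝔡/√(2β⁻¹(J(z⁰) − inf F)), (β − ε)/(2C·A_max)} for some β, ε > 0, and sequences (z^k), (x̃^k) as in Theorem 2.1 (z^{k+1} = (1 − w)z^k + w·x̃^k, J̃_{z^k}(x̃^k) ≤ J̃_{z^k}(z^k), e^k ∈ ∂J̃_{z^k}(x̃^k) with e^k → 0), let L := lim_k J(z^k) and V_L := {x : −A'(x)*A(x) ∈ ∂F(x) and J(x) = L}. Suppose V_L = U₁ ∪ U₂ for disjoint closed sets U₁, U₂. Then any two accumulation points x̂₁, x̂₂ of (z^k) lie in the same set U_j: it is impossible that x̂₁ ∈ U₁ and x̂₂ ∈ U₂ (Theorem 2.1(iii)). -/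

import Mathlib

open Filter Topology Metric Bornology
open scoped RealInnerProductSpace

/-- The objective `J(x) = (1/2)‖A(x)‖² + F(x)` with extended-real-valued `F`. -/
noncomputable def Jobj {N M : ℕ} (F : EuclideanSpace ℝ (Fin N) → EReal)
    (A : EuclideanSpace ℝ (Fin N) → EuclideanSpace ℝ (Fin M))
    (x : EuclideanSpace ℝ (Fin N)) : EReal :=
  ((1 / 2 * ‖A x‖ ^ 2 : ℝ) : EReal) + F x

/-- The linearisation `A_z(x) = A(z) + A'(z)(x − z)`. -/
noncomputable def Alin {N M : ℕ}
    (A : EuclideanSpace ℝ (Fin N) → EuclideanSpace ℝ (Fin M))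
    (A' : EuclideanSpace ℝ (Fin N) → (EuclideanSpace ℝ (Fin N) →L[ℝ] EuclideanSpace ℝ (Fin M)))
    (z x : EuclideanSpace ℝ (Fin N)) : EuclideanSpace ℝ (Fin M) :=
  A z + A' z (x - z)

/-- The linearised objective `J_z(x) = (1/2)‖A_z(x)‖² + F(x)`. -/
noncomputable def Jlin {N M : ℕ} (F : EuclideanSpace ℝ (Fin N) → EReal)
    (A : EuclideanSpace ℝ (Fin N) → EuclideanSpace ℝ (Fin M))
    (A' : EuclideanSpace ℝ (Fin N) → (EuclideanSpace ℝ (Fin N) →L[ℝ] EuclideanSpace ℝ (Fin M)))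
    (z x : EuclideanSpace ℝ (Fin N)) : EReal :=
  ((1 / 2 * ‖Alin A A' z x‖ ^ 2 : ℝ) : EReal) + F x

/-- The proximally relaxed linearised objective `J̃_z(x) = J_z(x) + (β/2)‖x − z‖²`. -/
noncomputable def Jprox {N M : ℕ} (F : EuclideanSpace ℝ (Fin N) → EReal)
    (A : EuclideanSpace ℝ (Fin N) → EuclideanSpace ℝ (Fin M))
    (A' : EuclideanSpace ℝ (Fin N) → (EuclideanSpace ℝ (Fin N) →L[ℝ] EuclideanSpace ℝ (Fin M)))
    (β : ℝ) (z x : EuclideanSpace ℝ (Fin N)) : EReal :=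
  Jlin F A A' z x + ((β / 2 * ‖x - z‖ ^ 2 : ℝ) : EReal)


private lemma normsq_cvx {E : Type*} [NormedAddCommGroup E] [InnerProductSpace ℝ E]
    (x y : E) {t : ℝ} (h0 : 0 ≤ t) (h1 : t ≤ 1) :
    ‖(1 - t) • x + t • y‖ ^ 2 ≤ (1 - t) * ‖x‖ ^ 2 + t * ‖y‖ ^ 2 := by
  have h := norm_add_sq_real ((1 - t) • x) (t • y)
  have hi : ⟪(1 - t) • x, t • y⟫ = (1 - t) * (t * ⟪x, y⟫) := by
    rw [real_inner_smul_left, real_inner_smul_right]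
  have hxy : ⟪x, y⟫ ≤ ‖x‖ * ‖y‖ := real_inner_le_norm x y
  have hnx : ‖(1 - t) • x‖ = (1 - t) * ‖x‖ := by
    rw [norm_smul, Real.norm_eq_abs, abs_of_nonneg (by linarith)]
  have hny : ‖t • y‖ = t * ‖y‖ := by
    rw [norm_smul, Real.norm_eq_abs, abs_of_nonneg h0]
  rw [h, hi, hnx, hny]
  nlinarith [sq_nonneg (‖x‖ - ‖y‖), norm_nonneg x, norm_nonneg y,
    mul_nonneg h0 (by linarith : (0:ℝ) ≤ 1 - t)]

private lemma ivt_aux (G : ℕ → ℝ) (η : ℝ) :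
    ∀ (n k₁ : ℕ), G k₁ ≤ 0 → 0 ≤ G (k₁ + n) → (∀ k, k₁ ≤ k → |G (k + 1) - G k| ≤ η) →
      ∃ m, k₁ ≤ m ∧ |G m| ≤ η := by
  intro n
  induction n with
  | zero =>
    intro k₁ h0 hn hstep
    refine ⟨k₁, le_rfl, ?_⟩
    have hη : 0 ≤ η := le_trans (abs_nonneg _) (hstep k₁ le_rfl)
    have : G k₁ = 0 := le_antisymm h0 (by simpa using hn)
    rw [this, abs_zero]; exact hη
  | succ n ih =>
    intro k₁ h0 hn hstep
    by_cases hc : G (k₁ + 1) ≤ 0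
    · obtain ⟨m, hm1, hm2⟩ := ih (k₁ + 1) hc
        (by rw [show k₁ + 1 + n = k₁ + (n + 1) by omega]; exact hn)
        (fun k hk => hstep k (by omega))
      exact ⟨m, by omega, hm2⟩
    · push_neg at hc
      have h1 : G (k₁ + 1) - G k₁ ≤ η := le_trans (le_abs_self _) (hstep k₁ le_rfl)
      exact ⟨k₁ + 1, by omega, by rw [abs_of_pos hc]; linarith⟩
set_option maxHeartbeats 1000000 in
/-- Theorem 2.1(iii): if the critical level set `V_L` is the union of two disjoint
closed sets `U₁, U₂`, then no two accumulation points of `(z^k)` lie in different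
ones of these sets. -/
theorem stmt_8 {N M : ℕ}
    (F : EuclideanSpace ℝ (Fin N) → EReal)
    (A : EuclideanSpace ℝ (Fin N) → EuclideanSpace ℝ (Fin M))
    (A' : EuclideanSpace ℝ (Fin N) → (EuclideanSpace ℝ (Fin N) →L[ℝ] EuclideanSpace ℝ (Fin M)))
    -- Assumption 2.1
    (hFconv : ∀ x y : EuclideanSpace ℝ (Fin N), ∀ a b : ℝ, 0 ≤ a → 0 ≤ b → a + b = 1 →
      F (a • x + b • y) ≤ (a : EReal) * F x + (b : EReal) * F y)
    (hFproper : ∃ x, F x ≠ ⊤)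
    (hFnebot : ∀ x, F x ≠ ⊥)
    (hFlsc : LowerSemicontinuous F)
    (hInf : ⊥ < ⨅ x, F x)
    (hderiv : ∀ x, F x ≠ ⊤ → HasFDerivAt A (A' x) x)
    (hA'cont : ContinuousOn A' {x | F x ≠ ⊤})
    (z xt : ℕ → EuclideanSpace ℝ (Fin N))
    (hz0 : F (z 0) ≠ ⊤)
    (hlev : IsBounded {x | Jobj F A x ≤ Jobj F A (z 0)})
    (Amax C dd : ℝ) (hC : 0 < C) (hdd : 0 < dd)
    (hAmax : ∀ x, F x ≠ ⊤ → ‖A x‖ ≤ Amax)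
    (herr : ∀ y, Jobj F A y ≤ Jobj F A (z 0) → ∀ x ∈ closedBall y dd,
      ‖A x - Alin A A' y x‖ ≤ C * ‖x - y‖ ^ 2)
    -- the step-size bound (2.3)
    (β ε w : ℝ) (hβ : 0 < β) (hε : 0 < ε)
    (hw0 : 0 < w) (hw1 : w ≤ 1)
    (hw2 : w ≤ dd / Real.sqrt (2 * β⁻¹ * (Jobj F A (z 0) - ⨅ x, F x).toReal))
    (hw3 : w ≤ (β - ε) / (2 * C * Amax))
    -- the iteration
    (hrec : ∀ k, z (k + 1) = (1 - w) • z k + w • xt k)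
    (hdec : ∀ k, Jprox F A A' β (z k) (xt k) ≤ Jprox F A A' β (z k) (z k))
    -- the inexact subdifferential condition: `e^k ∈ ∂J̃_{z^k}(x̃^k)` with `e^k → 0`
    (e : ℕ → EuclideanSpace ℝ (Fin N))
    (he : ∀ k y, Jprox F A A' β (z k) (xt k) + ((⟪e k, y - xt k⟫ : ℝ) : EReal)
      ≤ Jprox F A A' β (z k) y)
    (he0 : Tendsto e atTop (𝓝 0))
    -- the limit `L` and the critical level set `V_L = U₁ ∪ U₂`
    (L : EReal) (hL : Tendsto (fun k => Jobj F A (z k)) atTop (𝓝 L))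
    (U₁ U₂ : Set (EuclideanSpace ℝ (Fin N)))
    (hU₁ : IsClosed U₁) (hU₂ : IsClosed U₂) (hUdisj : Disjoint U₁ U₂)
    (hVL : {x | (∀ y, F x +
        ((-⟪(ContinuousLinearMap.adjoint (A' x)) (A x), y - x⟫ : ℝ) : EReal) ≤ F y) ∧
        Jobj F A x = L} = U₁ ∪ U₂) :
    ∀ xh₁ xh₂ : EuclideanSpace ℝ (Fin N),
      (∃ φ : ℕ → ℕ, StrictMono φ ∧ Tendsto (z ∘ φ) atTop (𝓝 xh₁)) →
      (∃ φ : ℕ → ℕ, StrictMono φ ∧ Tendsto (z ∘ φ) atTop (𝓝 xh₂)) →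
      ¬(xh₁ ∈ U₁ ∧ xh₂ ∈ U₂) := by
  rintro xh₁ xh₂ ⟨φ₁, hφ₁m, hφ₁⟩ ⟨φ₂, hφ₂m, hφ₂⟩ ⟨hx1, hx2⟩
  obtain ⟨x₀, hx₀⟩ := hFproper
  -- basic constants
  obtain ⟨fr, hfr_def⟩ : ∃ f : EuclideanSpace ℝ (Fin N) → ℝ, f = fun x => (F x).toReal :=
    ⟨_, rfl⟩
  obtain ⟨Jr, hJr_def⟩ : ∃ f : EuclideanSpace ℝ (Fin N) → ℝ,
      f = fun x => 1 / 2 * ‖A x‖ ^ 2 + fr x := ⟨_, rfl⟩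
  have hFcoe : ∀ x, F x ≠ ⊤ → F x = ((fr x : ℝ) : EReal) := by
    intro x hx
    rw [hfr_def]
    exact (EReal.coe_toReal hx (hFnebot x)).symm
  have hJobj_eq : ∀ x, F x ≠ ⊤ → Jobj F A x = ((Jr x : ℝ) : EReal) := by
    intro x hx
    rw [Jobj, hFcoe x hx, ← EReal.coe_add, hJr_def]
  -- the infimum of F
  have hItop : (⨅ x, F x) ≠ ⊤ := by
    have hle := iInf_le F x₀
    intro h; rw [h, top_le_iff] at hle; exact hx₀ hle
  have hIbot : (⨅ x, F x) ≠ ⊥ := hInf.ne'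
  obtain ⟨m, hm_def⟩ : ∃ r : ℝ, r = (⨅ x, F x).toReal := ⟨_, rfl⟩
  have hmF : ∀ x, (m : EReal) ≤ F x := by
    intro x
    rw [hm_def, EReal.coe_toReal hItop hIbot]
    exact iInf_le F x
  have hmfr : ∀ x, F x ≠ ⊤ → m ≤ fr x := by
    intro x hx
    have h := hmF x
    rw [hFcoe x hx] at h
    exact_mod_cast h
  have hmJr : ∀ x, F x ≠ ⊤ → m ≤ Jr x := by
    intro x hx
    have h1 := hmfr x hx
    have h2 : (0:ℝ) ≤ 1 / 2 * ‖A x‖ ^ 2 := by positivity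
    rw [hJr_def]
    simp only []
    linarith
  -- Amax > 0
  have hAm0 : 0 < Amax := by
    have h0 : 0 ≤ Amax := le_trans (norm_nonneg _) (hAmax x₀ hx₀)
    rcases h0.lt_or_eq with h | h
    · exact h
    · exfalso; rw [← h, mul_zero, div_zero] at hw3; linarith
  have hwA : 2 * C * Amax * w ≤ β - ε := by
    have h := (le_div_iff₀ (by positivity : (0:ℝ) < 2 * C * Amax)).mp hw3
    calc 2 * C * Amax * w = w * (2 * C * Amax) := by ring
      _ ≤ β - ε := h
  -- D and step bound
  obtain ⟨D, hD_def⟩ : ∃ r : ℝ, r = Real.sqrt (2 * β⁻¹ * (Jr (z 0) - m)) := ⟨_, rfl⟩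
  have hJrm : m ≤ Jr (z 0) := hmJr _ hz0
  have hDsq : D ^ 2 = 2 * β⁻¹ * (Jr (z 0) - m) := by
    rw [hD_def]
    exact Real.sq_sqrt (mul_nonneg (by positivity) (by linarith))
  have hwD : w * D ≤ dd := by
    have hsub : (Jobj F A (z 0) - ⨅ x, F x).toReal = Jr (z 0) - m := by
      rw [hJobj_eq _ hz0, ← EReal.coe_toReal hItop hIbot, ← hm_def, ← EReal.coe_sub,
        EReal.toReal_coe]
    have hw2' : w ≤ dd / D := by rw [hD_def, ← hsub]; exact hw2
    rcases eq_or_lt_of_le (Real.sqrt_nonneg (2 * β⁻¹ * (Jr (z 0) - m))) with h | h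
    · exfalso
      rw [show D = Real.sqrt (2 * β⁻¹ * (Jr (z 0) - m)) from hD_def, ← h, div_zero] at hw2'
      linarith
    · rw [← hD_def] at h
      exact (le_div_iff₀ h).mp hw2'
  -- Jprox at z equals Jobj
  have hJproxz : ∀ x, Jprox F A A' β x x = Jobj F A x := by
    intro x
    simp [Jprox, Jlin, Jobj, Alin]
  obtain ⟨d, hd_def⟩ : ∃ f : ℕ → ℝ, f = fun k => ‖xt k - z k‖ := ⟨_, rfl⟩
  obtain ⟨Jt, hJt_def⟩ : ∃ f : ℕ → ℝ,
      f = fun k => 1 / 2 * ‖Alin A A' (z k) (xt k)‖ ^ 2 + fr (xt k) + β / 2 * d k ^ 2 :=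
    ⟨_, rfl⟩
  have hd_nonneg : ∀ k, 0 ≤ d k := by intro k; rw [hd_def]; exact norm_nonneg _
  -- the master step
  have step : ∀ k, F (z k) ≠ ⊤ → Jr (z k) ≤ Jr (z 0) →
      F (xt k) ≠ ⊤ ∧ Jt k ≤ Jr (z k) ∧ F (z (k + 1)) ≠ ⊤ ∧
      Jr (z (k + 1)) ≤ (1 - w) * Jr (z k) + w * Jt k - w * ε / 2 * d k ^ 2 := by
    intro k hk hJk
    have hdecE : Jprox F A A' β (z k) (xt k) ≤ ((Jr (z k) : ℝ) : EReal) := by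
      have h := hdec k
      rwa [hJproxz, hJobj_eq _ hk] at h
    have hxt : F (xt k) ≠ ⊤ := by
      intro htop
      simp only [Jprox, Jlin, htop, EReal.coe_add_top, EReal.top_add_coe] at hdecE
      exact (EReal.coe_ne_top _) (top_le_iff.mp hdecE)
    have hxtcoe := hFcoe _ hxt
    have hdec_real : 1 / 2 * ‖Alin A A' (z k) (xt k)‖ ^ 2 + fr (xt k)
        + β / 2 * ‖xt k - z k‖ ^ 2 ≤ Jr (z k) := by
      simp only [Jprox, Jlin] at hdecE
      rw [hxtcoe, ← EReal.coe_add, ← EReal.coe_add] at hdecE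
      exact_mod_cast hdecE
    have hI2 : Jt k ≤ Jr (z k) := by
      simp only [hJt_def, hd_def]
      exact hdec_real
    -- ‖xt k - z k‖ ≤ D
    have hfrm := hmfr _ hxt
    have hdd2 : β / 2 * ‖xt k - z k‖ ^ 2 ≤ Jr (z 0) - m := by
      have hsq : (0:ℝ) ≤ ‖Alin A A' (z k) (xt k)‖ ^ 2 := sq_nonneg _
      linarith
    have hD0 : 0 ≤ D := by rw [hD_def]; exact Real.sqrt_nonneg _
    have hdD : ‖xt k - z k‖ ≤ D := by
      have h2 : 2 * β⁻¹ * (β / 2 * ‖xt k - z k‖ ^ 2) ≤ 2 * β⁻¹ * (Jr (z 0) - m) :=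
        mul_le_mul_of_nonneg_left hdd2 (by positivity)
      have h3 : 2 * β⁻¹ * (β / 2 * ‖xt k - z k‖ ^ 2) = ‖xt k - z k‖ ^ 2 := by
        field_simp
      rw [h3, ← hDsq] at h2
      rw [← Real.sqrt_sq (norm_nonneg (xt k - z k)), ← Real.sqrt_sq hD0]
      exact Real.sqrt_le_sqrt h2
    -- membership in the ball and the quadratic error bound
    have hz1 : z (k + 1) - z k = w • (xt k - z k) := by rw [hrec k]; module
    have hmem : z (k + 1) ∈ closedBall (z k) dd := by
      rw [mem_closedBall, dist_eq_norm, hz1, norm_smul, Real.norm_eq_abs, abs_of_pos hw0]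
      calc w * ‖xt k - z k‖ ≤ w * D := mul_le_mul_of_nonneg_left hdD hw0.le
        _ ≤ dd := hwD
    have herrk := herr (z k)
      (by rw [hJobj_eq _ hk, hJobj_eq _ hz0]; exact_mod_cast hJk) (z (k + 1)) hmem
    have herrk' : ‖A (z (k + 1)) - Alin A A' (z k) (z (k + 1))‖ ≤ C * w ^ 2 * ‖xt k - z k‖ ^ 2 := by
      rw [hz1, norm_smul, Real.norm_eq_abs, abs_of_pos hw0] at herrk
      calc ‖A (z (k + 1)) - Alin A A' (z k) (z (k + 1))‖ ≤ C * (w * ‖xt k - z k‖) ^ 2 := herrk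
        _ = C * w ^ 2 * ‖xt k - z k‖ ^ 2 := by ring
    -- convexity of F
    have hconv := hFconv (z k) (xt k) (1 - w) w (by linarith) hw0.le (by ring)
    rw [← hrec k, hFcoe _ hk, hxtcoe, ← EReal.coe_mul, ← EReal.coe_mul, ← EReal.coe_add]
      at hconv
    have hz1top : F (z (k + 1)) ≠ ⊤ := by
      intro h; rw [h] at hconv; exact (EReal.coe_ne_top _) (top_le_iff.mp hconv)
    have hfz1 : fr (z (k + 1)) ≤ (1 - w) * fr (z k) + w * fr (xt k) := by
      rw [hFcoe _ hz1top] at hconv; exact_mod_cast hconv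
    have hAz1 : ‖A (z (k + 1))‖ ≤ Amax := hAmax _ hz1top
    -- Alin decomposition and norm convexity
    have hAlin2 : Alin A A' (z k) (z (k + 1)) =
        (1 - w) • A (z k) + w • Alin A A' (z k) (xt k) := by
      have h1 : Alin A A' (z k) (z (k + 1)) = A (z k) + w • (A' (z k) (xt k - z k)) := by
        rw [Alin, hz1, map_smul]
      rw [h1, Alin]
      module
    have hcvx : ‖Alin A A' (z k) (z (k + 1))‖ ^ 2 ≤
        (1 - w) * ‖A (z k)‖ ^ 2 + w * ‖Alin A A' (z k) (xt k)‖ ^ 2 := by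
      rw [hAlin2]
      exact normsq_cvx _ _ hw0.le hw1
    -- quadratic error estimate
    have hqerr : ‖A (z (k + 1))‖ ^ 2 - ‖Alin A A' (z k) (z (k + 1))‖ ^ 2 ≤
        2 * Amax * (C * w ^ 2 * ‖xt k - z k‖ ^ 2) := by
      rcases le_or_gt ‖A (z (k + 1))‖ ‖Alin A A' (z k) (z (k + 1))‖ with h | h
      · have h1 : ‖A (z (k + 1))‖ ^ 2 ≤ ‖Alin A A' (z k) (z (k + 1))‖ ^ 2 :=
          pow_le_pow_left₀ (norm_nonneg _) h 2
        have h2 : (0:ℝ) ≤ 2 * Amax * (C * w ^ 2 * ‖xt k - z k‖ ^ 2) := by positivity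
        linarith
      · have h1 : ‖A (z (k + 1))‖ - ‖Alin A A' (z k) (z (k + 1))‖ ≤
            C * w ^ 2 * ‖xt k - z k‖ ^ 2 :=
          le_trans (norm_sub_norm_le _ _) herrk'
        have h2 : (‖A (z (k + 1))‖ - ‖Alin A A' (z k) (z (k + 1))‖) *
              (‖A (z (k + 1))‖ + ‖Alin A A' (z k) (z (k + 1))‖) ≤
            (C * w ^ 2 * ‖xt k - z k‖ ^ 2) * (2 * Amax) :=
          mul_le_mul h1 (by linarith [norm_nonneg (Alin A A' (z k) (z (k + 1)))])
            (by linarith [norm_nonneg (A (z (k + 1))), norm_nonneg (Alin A A' (z k) (z (k + 1)))])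
            (by positivity)
        nlinarith [h2]
    -- final arithmetic
    refine ⟨hxt, hI2, hz1top, ?_⟩
    have hJr1 : Jr (z (k + 1)) = 1 / 2 * ‖A (z (k + 1))‖ ^ 2 + fr (z (k + 1)) := by
      rw [hJr_def]
    have hJrk : Jr (z k) = 1 / 2 * ‖A (z k)‖ ^ 2 + fr (z k) := by rw [hJr_def]
    have hJtk : Jt k = 1 / 2 * ‖Alin A A' (z k) (xt k)‖ ^ 2 + fr (xt k)
        + β / 2 * ‖xt k - z k‖ ^ 2 := by simp only [hJt_def, hd_def]
    have hdk2 : d k = ‖xt k - z k‖ := by rw [hd_def]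
    rw [hJr1, hJrk, hJtk, hdk2]
    have h4 : (2 * C * Amax * w) * (w * ‖xt k - z k‖ ^ 2) ≤
        (β - ε) * (w * ‖xt k - z k‖ ^ 2) :=
      mul_le_mul_of_nonneg_right hwA (by positivity)
    linarith [hqerr, hcvx, hfz1, h4]
  have H : ∀ k, F (z k) ≠ ⊤ ∧ Jr (z k) ≤ Jr (z 0) := by
    intro k
    induction k with
    | zero => exact ⟨hz0, le_rfl⟩
    | succ k ih =>
      obtain ⟨_, h2, h3, h4⟩ := step k ih.1 ih.2
      refine ⟨h3, ?_⟩
      have hmul : w * Jt k ≤ w * Jr (z k) := mul_le_mul_of_nonneg_left h2 hw0.le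
      have hq : 0 ≤ w * ε / 2 * d k ^ 2 := by positivity
      have hle : Jr (z (k + 1)) ≤ Jr (z k) := by linarith
      linarith [ih.2]
  have hztop : ∀ k, F (z k) ≠ ⊤ := fun k => (H k).1
  have hxtop : ∀ k, F (xt k) ≠ ⊤ := fun k => (step k (H k).1 (H k).2).1
  have I2 : ∀ k, Jt k ≤ Jr (z k) := fun k => (step k (H k).1 (H k).2).2.1
  have I1 : ∀ k, Jr (z (k + 1)) ≤ (1 - w) * Jr (z k) + w * Jt k - w * ε / 2 * d k ^ 2 :=
    fun k => (step k (H k).1 (H k).2).2.2.2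
  -- convergence of Jr (z k) to a real limit
  have hL' : Tendsto (fun k => ((Jr (z k) : ℝ) : EReal)) atTop (𝓝 L) :=
    hL.congr (fun k => hJobj_eq _ (hztop k))
  have hub : L ≤ ((Jr (z 0) : ℝ) : EReal) :=
    le_of_tendsto hL' (Eventually.of_forall fun k => EReal.coe_le_coe_iff.mpr (H k).2)
  have hlb : ((m : ℝ) : EReal) ≤ L :=
    ge_of_tendsto hL' (Eventually.of_forall fun k => EReal.coe_le_coe_iff.mpr (hmJr _ (hztop k)))
  have hLtop : L ≠ ⊤ := fun h => by rw [h, top_le_iff] at hub; exact (EReal.coe_ne_top _) hub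
  have hLbot : L ≠ ⊥ := fun h => by rw [h, le_bot_iff] at hlb; exact (EReal.coe_ne_bot _) hlb
  obtain ⟨Lr, hLr_def⟩ : ∃ r : ℝ, r = L.toReal := ⟨_, rfl⟩
  have hLr : L = (Lr : EReal) := by rw [hLr_def]; exact (EReal.coe_toReal hLtop hLbot).symm
  have hJrL : Tendsto (fun k => Jr (z k)) atTop (𝓝 Lr) := by
    rw [hLr] at hL'
    exact EReal.tendsto_coe.mp hL'
  -- differences tend to zero
  have hzsucc : Tendsto (fun k => Jr (z (k + 1))) atTop (𝓝 Lr) :=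
    hJrL.comp (tendsto_add_atTop_nat 1)
  have hdiff : Tendsto (fun k => Jr (z k) - Jr (z (k + 1))) atTop (𝓝 0) := by
    simpa using hJrL.sub hzsucc
  -- d → 0 and Jt → Lr
  have hkey : ∀ k, w * ε / 2 * d k ^ 2 ≤ Jr (z k) - Jr (z (k + 1)) := by
    intro k
    have hmul : w * Jt k ≤ w * Jr (z k) := mul_le_mul_of_nonneg_left (I2 k) hw0.le
    linarith [I1 k]
  have hkey2 : ∀ k, w * (Jr (z k) - Jt k) ≤ Jr (z k) - Jr (z (k + 1)) := by
    intro k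
    have hq : 0 ≤ w * ε / 2 * d k ^ 2 := by positivity
    have h := I1 k
    nlinarith
  have hd2 : Tendsto (fun k => d k ^ 2) atTop (𝓝 0) := by
    have hwe : (0:ℝ) < w * ε := by positivity
    have hne : w * ε ≠ 0 := ne_of_gt hwe
    have htend : Tendsto (fun k => 2 / (w * ε) * (Jr (z k) - Jr (z (k + 1)))) atTop (𝓝 0) := by
      simpa using hdiff.const_mul (2 / (w * ε))
    apply squeeze_zero (fun k => sq_nonneg _) (fun k => ?_) htend
    calc d k ^ 2 = 2 / (w * ε) * (w * ε / 2 * d k ^ 2) := by field_simp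
      _ ≤ 2 / (w * ε) * (Jr (z k) - Jr (z (k + 1))) :=
          mul_le_mul_of_nonneg_left (hkey k) (by positivity)
  have hdk : Tendsto d atTop (𝓝 0) := by
    have h := (Real.continuous_sqrt.tendsto 0).comp hd2
    rw [Real.sqrt_zero] at h
    apply h.congr
    intro k
    exact Real.sqrt_sq (hd_nonneg k)
  have hJtL : Tendsto Jt atTop (𝓝 Lr) := by
    have hwne : w ≠ 0 := ne_of_gt hw0
    have htend : Tendsto (fun k => 1 / w * (Jr (z k) - Jr (z (k + 1)))) atTop (𝓝 0) := by
      simpa using hdiff.const_mul (1 / w)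
    have h3 : Tendsto (fun k => Jr (z k) - Jt k) atTop (𝓝 0) := by
      apply squeeze_zero (fun k => by linarith [I2 k]) (fun k => ?_) htend
      calc Jr (z k) - Jt k = 1 / w * (w * (Jr (z k) - Jt k)) := by field_simp
        _ ≤ 1 / w * (Jr (z k) - Jr (z (k + 1))) :=
            mul_le_mul_of_nonneg_left (hkey2 k) (by positivity)
    have h4 := hJrL.sub h3
    rw [sub_zero] at h4
    apply h4.congr
    intro k
    ring
  -- boundedness
  have hbd : ∀ k, z k ∈ {x | Jobj F A x ≤ Jobj F A (z 0)} := by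
    intro k
    simp only [Set.mem_setOf_eq, hJobj_eq _ (hztop k), hJobj_eq _ hz0]
    exact_mod_cast (H k).2
  -- Claim A: every cluster point lies in U₁ ∪ U₂
  have hfrJr : ∀ x, fr x ≤ Jr x := by
    intro x
    simp only [hJr_def]
    nlinarith [sq_nonneg ‖A x‖]
  have clA : ∀ (p : EuclideanSpace ℝ (Fin N)) (σ : ℕ → ℕ), Tendsto σ atTop atTop →
      Tendsto (fun k => z (σ k)) atTop (𝓝 p) → p ∈ U₁ ∪ U₂ := by
    intro p σ hσ hzp
    -- F p is finite
    have hptop : F p ≠ ⊤ := by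
      intro htop
      have hy : ((Jr (z 0) : ℝ) : EReal) < F p := by rw [htop]; exact EReal.coe_lt_top _
      obtain ⟨k, hk⟩ := (hzp.eventually (hFlsc p _ hy)).exists
      have hle : F (z (σ k)) ≤ ((Jr (z 0) : ℝ) : EReal) := by
        rw [hFcoe _ (hztop (σ k))]
        exact_mod_cast le_trans (hfrJr _) (H (σ k)).2
      exact absurd hk (not_lt.mpr hle)
    -- continuity facts along the subsequence
    have hA'p : Tendsto (fun k => A' (z (σ k))) atTop (𝓝 (A' p)) := by
      have hcw : ContinuousWithinAt A' {x | F x ≠ ⊤} p := hA'cont p hptop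
      exact hcw.tendsto.comp (tendsto_nhdsWithin_iff.mpr
        ⟨hzp, Eventually.of_forall (fun k => hztop (σ k))⟩)
    have hAp : Tendsto (fun k => A (z (σ k))) atTop (𝓝 (A p)) :=
      (hderiv p hptop).continuousAt.tendsto.comp hzp
    have hdσ : Tendsto (fun k => d (σ k)) atTop (𝓝 0) := hdk.comp hσ
    have hvk : Tendsto (fun k => xt (σ k) - z (σ k)) atTop (𝓝 0) := by
      rw [tendsto_zero_iff_norm_tendsto_zero]
      exact hdσ.congr (fun k => by rw [hd_def])
    have hxtσ : Tendsto (fun k => xt (σ k)) atTop (𝓝 p) := by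
      have h := hzp.add hvk
      rw [add_zero] at h
      exact h.congr (fun k => by abel)
    have happly : Continuous fun q : (EuclideanSpace ℝ (Fin N) →L[ℝ]
        EuclideanSpace ℝ (Fin M)) × EuclideanSpace ℝ (Fin N) => q.1 q.2 :=
      isBoundedBilinearMap_apply.continuous
    have hA'v : Tendsto (fun k => (A' (z (σ k))) (xt (σ k) - z (σ k))) atTop (𝓝 0) := by
      have h : Tendsto (fun k => (A' (z (σ k))) (xt (σ k) - z (σ k))) atTop
          (𝓝 ((A' p) 0)) :=
        (happly.tendsto ((A' p), 0)).comp (hA'p.prodMk_nhds hvk)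
      rwa [map_zero] at h
    have hAlinxt : Tendsto (fun k => Alin A A' (z (σ k)) (xt (σ k))) atTop (𝓝 (A p)) := by
      have h := hAp.add hA'v
      rw [add_zero] at h
      exact h.congr (fun k => rfl)
    have hJtσ : Tendsto (fun k => Jt (σ k)) atTop (𝓝 Lr) := hJtL.comp hσ
    have hnormsq : Tendsto (fun k => 1 / 2 * ‖Alin A A' (z (σ k)) (xt (σ k))‖ ^ 2) atTop
        (𝓝 (1 / 2 * ‖A p‖ ^ 2)) := ((hAlinxt.norm.pow 2).const_mul _)
    have hfrxt : Tendsto (fun k => fr (xt (σ k))) atTop (𝓝 (Lr - 1 / 2 * ‖A p‖ ^ 2)) := by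
      have hβd : Tendsto (fun k => β / 2 * d (σ k) ^ 2) atTop (𝓝 0) := by
        have h := (hdσ.pow 2).const_mul (β / 2)
        simpa using h
      have h := (hJtσ.sub hnormsq).sub hβd
      rw [sub_zero] at h
      apply h.congr
      intro k
      simp only [hJt_def]
      ring
    -- F p ≤ liminf via lsc
    have hfp_le : fr p ≤ Lr - 1 / 2 * ‖A p‖ ^ 2 := by
      by_contra hlt
      push_neg at hlt
      obtain ⟨c, hc1, hc2⟩ := exists_between hlt
      have hcE : (c : EReal) < F p := by
        rw [hFcoe _ hptop]; exact_mod_cast hc2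
      have hev3 : ∀ᶠ k in atTop, c < fr (xt (σ k)) := by
        filter_upwards [hxtσ.eventually (hFlsc p _ hcE)] with k hk
        rw [hFcoe _ (hxtop (σ k))] at hk
        exact_mod_cast hk
      obtain ⟨k, h1, h2⟩ := (hev3.and (hfrxt.eventually (gt_mem_nhds hc1))).exists
      linarith
    -- the key limit inequality
    have hkey : ∀ y, F y ≠ ⊤ →
        Lr ≤ 1 / 2 * ‖Alin A A' p y‖ ^ 2 + fr y + β / 2 * ‖y - p‖ ^ 2 := by
      intro y hy
      have hreal : ∀ k, Jt (σ k) + ⟪e (σ k), y - xt (σ k)⟫ ≤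
          1 / 2 * ‖Alin A A' (z (σ k)) y‖ ^ 2 + fr y + β / 2 * ‖y - z (σ k)‖ ^ 2 := by
        intro k
        have h := he (σ k) y
        simp only [Jprox, Jlin] at h
        rw [hFcoe _ (hxtop (σ k)), hFcoe _ hy] at h
        have h' : 1 / 2 * ‖Alin A A' (z (σ k)) (xt (σ k))‖ ^ 2 + fr (xt (σ k))
            + β / 2 * ‖xt (σ k) - z (σ k)‖ ^ 2 + ⟪e (σ k), y - xt (σ k)⟫ ≤
            1 / 2 * ‖Alin A A' (z (σ k)) y‖ ^ 2 + fr y + β / 2 * ‖y - z (σ k)‖ ^ 2 := by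
          exact_mod_cast h
        simp only [hJt_def, hd_def]
        linarith
      have hinner : Tendsto (fun k => (⟪e (σ k), y - xt (σ k)⟫ : ℝ)) atTop (𝓝 0) := by
        have h1 : Tendsto (fun k => e (σ k)) atTop (𝓝 0) := he0.comp hσ
        have h2 : Tendsto (fun k => y - xt (σ k)) atTop (𝓝 (y - p)) :=
          tendsto_const_nhds.sub hxtσ
        have h := Filter.Tendsto.inner (𝕜 := ℝ) h1 h2
        simpa using h
      have hyz : Tendsto (fun k => y - z (σ k)) atTop (𝓝 (y - p)) :=
        tendsto_const_nhds.sub hzp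
      have hAliny : Tendsto (fun k => Alin A A' (z (σ k)) y) atTop (𝓝 (Alin A A' p y)) := by
        have h3 : Tendsto (fun k => (A' (z (σ k))) (y - z (σ k))) atTop
            (𝓝 ((A' p) (y - p))) :=
          (happly.tendsto (A' p, y - p)).comp (hA'p.prodMk_nhds hyz)
        exact (hAp.add h3).congr (fun k => rfl)
      have hLHS : Tendsto (fun k => Jt (σ k) + ⟪e (σ k), y - xt (σ k)⟫) atTop (𝓝 Lr) := by
        have h := hJtσ.add hinner
        rwa [add_zero] at h
      have hRHS : Tendsto (fun k => 1 / 2 * ‖Alin A A' (z (σ k)) y‖ ^ 2 + fr y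
          + β / 2 * ‖y - z (σ k)‖ ^ 2) atTop
          (𝓝 (1 / 2 * ‖Alin A A' p y‖ ^ 2 + fr y + β / 2 * ‖y - p‖ ^ 2)) :=
        (((hAliny.norm.pow 2).const_mul _).add tendsto_const_nhds).add
          ((hyz.norm.pow 2).const_mul _)
      exact le_of_tendsto_of_tendsto' hLHS hRHS hreal
    -- J(p) = L
    have hJrp : Jr p = Lr := by
      have h1 : Jr p ≤ Lr := by
        simp only [hJr_def]
        linarith
      have h2 := hkey p hptop
      have hAlinpp : Alin A A' p p = A p := by simp [Alin]
      rw [hAlinpp, sub_self, norm_zero] at h2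
      norm_num at h2
      simp only [hJr_def] at h1 ⊢
      linarith
    have hJrpe : 1 / 2 * ‖A p‖ ^ 2 + fr p = Lr := by
      rw [← hJrp]; simp only [hJr_def]
    -- the first-order condition
    have hsub : ∀ y, F p +
        ((-⟪(ContinuousLinearMap.adjoint (A' p)) (A p), y - p⟫ : ℝ) : EReal) ≤ F y := by
      intro y
      by_cases hy : F y = ⊤
      · rw [hy]; exact le_top
      · rw [hFcoe _ hptop, hFcoe _ hy, ← EReal.coe_add, EReal.coe_le_coe_iff,
          ContinuousLinearMap.adjoint_inner_left]
        have hmain : ∀ t : ℝ, 0 < t → t ≤ 1 →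
            fr p + -⟪A p, (A' p) (y - p)⟫ - fr y ≤
            t * (1 / 2 * ‖(A' p) (y - p)‖ ^ 2 + β / 2 * ‖y - p‖ ^ 2) := by
          intro t ht0 ht1
          have hyt := hFconv p y (1 - t) t (by linarith) ht0.le (by ring)
          rw [hFcoe _ hptop, hFcoe _ hy, ← EReal.coe_mul, ← EReal.coe_mul,
            ← EReal.coe_add] at hyt
          have hyttop : F ((1 - t) • p + t • y) ≠ ⊤ := by
            intro h; rw [h] at hyt; exact (EReal.coe_ne_top _) (top_le_iff.mp hyt)
          have hytfr : fr ((1 - t) • p + t • y) ≤ (1 - t) * fr p + t * fr y := by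
            rw [hFcoe _ hyttop] at hyt; exact_mod_cast hyt
          have hk2 := hkey _ hyttop
          have hvt : (1 - t) • p + t • y - p = t • (y - p) := by module
          have hAlinyt : Alin A A' p ((1 - t) • p + t • y) = A p + t • ((A' p) (y - p)) := by
            rw [Alin, hvt, map_smul]
          rw [hAlinyt, hvt] at hk2
          have hexp : ‖A p + t • ((A' p) (y - p))‖ ^ 2 =
              ‖A p‖ ^ 2 + 2 * t * ⟪A p, (A' p) (y - p)⟫ + t ^ 2 * ‖(A' p) (y - p)‖ ^ 2 := by
            rw [norm_add_sq_real, real_inner_smul_right, norm_smul, Real.norm_eq_abs,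
              abs_of_pos ht0]
            ring
          have hnt : ‖t • (y - p)‖ ^ 2 = t ^ 2 * ‖y - p‖ ^ 2 := by
            rw [norm_smul, Real.norm_eq_abs, abs_of_pos ht0]; ring
          rw [hexp, hnt] at hk2
          have hlin : t * (fr p + -⟪A p, (A' p) (y - p)⟫ - fr y) ≤
              t * (t * (1 / 2 * ‖(A' p) (y - p)‖ ^ 2 + β / 2 * ‖y - p‖ ^ 2)) := by
            nlinarith [hytfr, hk2, hJrpe]
          exact (mul_le_mul_iff_right₀ ht0).mp hlin
        have htt : Tendsto (fun n : ℕ => (1 / (n + 1) : ℝ) *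
            (1 / 2 * ‖(A' p) (y - p)‖ ^ 2 + β / 2 * ‖y - p‖ ^ 2)) atTop (𝓝 0) := by
          have h := tendsto_one_div_add_atTop_nhds_zero_nat.mul_const
            (1 / 2 * ‖(A' p) (y - p)‖ ^ 2 + β / 2 * ‖y - p‖ ^ 2)
          simpa using h
        have hle0 := ge_of_tendsto' htt (fun n => hmain (1 / (n + 1))
          (by positivity)
          (by rw [div_le_one (by positivity)]
              have : (0:ℝ) ≤ (n : ℝ) := Nat.cast_nonneg n
              linarith))
        linarith
    have hmemV : p ∈ {x | (∀ y, F x +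
        ((-⟪(ContinuousLinearMap.adjoint (A' x)) (A x), y - x⟫ : ℝ) : EReal) ≤ F y) ∧
        Jobj F A x = L} := by
      refine ⟨hsub, ?_⟩
      rw [hJobj_eq _ hptop, hJrp]
      exact hLr.symm
    rw [hVL] at hmemV
    exact hmemV
  -- the crossing function
  obtain ⟨g, hg_def⟩ : ∃ f : EuclideanSpace ℝ (Fin N) → ℝ,
      f = fun x => infDist x U₁ - infDist x U₂ := ⟨_, rfl⟩
  have hgcont : Continuous g := by
    rw [hg_def]; exact (continuous_infDist_pt U₁).sub (continuous_infDist_pt U₂)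
  have hU1ne : U₁.Nonempty := ⟨xh₁, hx1⟩
  have hU2ne : U₂.Nonempty := ⟨xh₂, hx2⟩
  have hg1 : g xh₁ < 0 := by
    have hx1' : xh₁ ∉ U₂ := fun h => Set.disjoint_left.mp hUdisj hx1 h
    have h := (hU₂.notMem_iff_infDist_pos hU2ne).mp hx1'
    simp only [hg_def]
    rw [infDist_zero_of_mem hx1]
    linarith
  have hg2 : 0 < g xh₂ := by
    have hx2' : xh₂ ∉ U₁ := fun h => Set.disjoint_left.mp hUdisj h hx2
    have h := (hU₁.notMem_iff_infDist_pos hU1ne).mp hx2'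
    simp only [hg_def]
    rw [infDist_zero_of_mem hx2]
    linarith
  -- step sizes tend to zero
  have hstep_eq : ∀ k, z (k + 1) - z k = w • (xt k - z k) := by
    intro k; rw [hrec k]; module
  have hsteps : Tendsto (fun k => ‖z (k + 1) - z k‖) atTop (𝓝 0) := by
    have heq : (fun k => ‖z (k + 1) - z k‖) = fun k => w * d k := funext fun k => by
      rw [hstep_eq k, norm_smul, Real.norm_eq_abs, abs_of_pos hw0, hd_def]
    rw [heq]
    simpa using hdk.const_mul w
  -- the crossing property
  have hglip : ∀ k, |g (z (k + 1)) - g (z k)| ≤ 2 * ‖z (k + 1) - z k‖ := by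
    intro k
    have h1 : |infDist (z (k+1)) U₁ - infDist (z k) U₁| ≤ dist (z (k+1)) (z k) := by
      rw [abs_sub_le_iff]
      constructor
      · linarith [infDist_le_infDist_add_dist (s := U₁) (x := z (k+1)) (y := z k)]
      · linarith [infDist_le_infDist_add_dist (s := U₁) (x := z k) (y := z (k+1)),
          dist_comm (z (k+1)) (z k)]
    have h2 : |infDist (z (k+1)) U₂ - infDist (z k) U₂| ≤ dist (z (k+1)) (z k) := by
      rw [abs_sub_le_iff]
      constructor
      · linarith [infDist_le_infDist_add_dist (s := U₂) (x := z (k+1)) (y := z k)]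
      · linarith [infDist_le_infDist_add_dist (s := U₂) (x := z k) (y := z (k+1)),
          dist_comm (z (k+1)) (z k)]
    rw [dist_eq_norm] at h1 h2
    simp only [hg_def]
    calc |infDist (z (k+1)) U₁ - infDist (z (k+1)) U₂ -
          (infDist (z k) U₁ - infDist (z k) U₂)|
        = |(infDist (z (k+1)) U₁ - infDist (z k) U₁) -
            (infDist (z (k+1)) U₂ - infDist (z k) U₂)| := by ring_nf
      _ ≤ |infDist (z (k+1)) U₁ - infDist (z k) U₁| +
            |infDist (z (k+1)) U₂ - infDist (z k) U₂| := abs_sub _ _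
      _ ≤ 2 * ‖z (k + 1) - z k‖ := by linarith
  have hcross : ∀ (n : ℕ) (η : ℝ), 0 < η → ∃ k, n ≤ k ∧ |g (z k)| ≤ η := by
    intro n η hη
    have h2 : Tendsto (fun k => 2 * ‖z (k + 1) - z k‖) atTop (𝓝 0) := by
      simpa using hsteps.const_mul 2
    obtain ⟨K, hK⟩ := (h2.eventually (gt_mem_nhds hη)).exists_forall_of_atTop
    -- pick k₁ along φ₁ with g < 0
    have hgφ₁ : Tendsto (fun j => g (z (φ₁ j))) atTop (𝓝 (g xh₁)) := (hgcont.tendsto _).comp hφ₁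
    have hgφ₂ : Tendsto (fun j => g (z (φ₂ j))) atTop (𝓝 (g xh₂)) := (hgcont.tendsto _).comp hφ₂
    obtain ⟨j₁, hj₁a, hj₁b⟩ := ((hgφ₁.eventually (gt_mem_nhds hg1)).and
      (hφ₁m.tendsto_atTop.eventually_ge_atTop (max n K))).exists
    obtain ⟨j₂, hj₂a, hj₂b⟩ := ((hgφ₂.eventually (lt_mem_nhds hg2)).and
      (hφ₂m.tendsto_atTop.eventually_ge_atTop (φ₁ j₁))).exists
    obtain ⟨k, hk1, hk2⟩ := ivt_aux (fun k => g (z k)) η (φ₂ j₂ - φ₁ j₁) (φ₁ j₁)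
      hj₁a.le (by rw [show φ₁ j₁ + (φ₂ j₂ - φ₁ j₁) = φ₂ j₂ by omega]; exact hj₂a.le)
      (fun k hk => (hK k (le_trans (le_max_right n K) (le_trans hj₁b hk))).le.trans'
        (hglip k))
    exact ⟨k, le_trans (le_max_left n K) (le_trans hj₁b hk1), hk2⟩
  -- build the intermediate cluster point
  choose kf hkf1 hkf2 using fun n : ℕ => hcross n (1 / (n + 1)) (by positivity)
  obtain ⟨p, _, ψ, hψm, hψt⟩ := tendsto_subseq_of_bounded hlev (fun n => hbd (kf n))
  have hσ : Tendsto (fun n => kf (ψ n)) atTop atTop :=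
    tendsto_atTop_mono (fun n => le_trans hψm.le_apply (hkf1 (ψ n))) tendsto_id
  have hp : p ∈ U₁ ∪ U₂ := clA p (fun n => kf (ψ n)) hσ hψt
  have hgp : g p = 0 := by
    have h1 : Tendsto (fun n => g (z (kf (ψ n)))) atTop (𝓝 (g p)) :=
      (hgcont.tendsto p).comp hψt
    have h2 : Tendsto (fun n => g (z (kf (ψ n)))) atTop (𝓝 0) := by
      apply squeeze_zero_norm (fun n => ?_) tendsto_one_div_add_atTop_nhds_zero_nat
      calc ‖g (z (kf (ψ n)))‖ ≤ 1 / (ψ n + 1) := hkf2 (ψ n)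
        _ ≤ 1 / (n + 1) := by
            apply one_div_le_one_div_of_le (by positivity)
            have h : (n : ℝ) ≤ (ψ n : ℝ) := Nat.cast_le.mpr hψm.le_apply
            linarith
    exact tendsto_nhds_unique h1 h2
  rcases hp with hp1 | hp2
  · have h0 : infDist p U₂ = 0 := by
      have h := infDist_zero_of_mem hp1
      simp only [hg_def] at hgp
      linarith
    exact Set.disjoint_left.mp hUdisj hp1 ((hU₂.mem_iff_infDist_zero hU2ne).mpr h0)
  · have h0 : infDist p U₁ = 0 := by
      have h := infDist_zero_of_mem hp2
      simp only [hg_def] at hgp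
      linarith
    exact Set.disjoint_left.mp hUdisj ((hU₁.mem_iff_infDist_zero hU1ne).mpr h0) hp2
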